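/- arXiv:1709.10270 — 2 statements merged into one kernel-verified Lean document; each statement's English description precedes it below -/
import Mathlib

section
/- Let R be a domain and r a finitary ideal system on R. If the localized ideal semigroup I_{r_m}(R_m) is unit-cancellative for every r-maximal r-ideal m of R, then I_r(R) is unit-cancellative. -/
open Pointwise

/-- An ideal system `r` on an integral domain `R`, with the standing convention that
every `r`-ideal is an ordinary ring ideal (`I_r(R) ⊆ I(R)`). The map `cl` is the
closure `X ↦ X_r`. -/
structure IdealSystem (R : Type*) [CommRing R] [IsDomain R] where
  cl : Set R → Set R
  subset_cl : ∀ X : Set R, X ⊆ cl X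
  cl_mono : ∀ X Y : Set R, X ⊆ cl Y → cl X ⊆ cl Y
  principal_subset : ∀ c : R, {x : R | ∃ y : R, x = c * y} ⊆ cl {c}
  smul_cl : ∀ (c : R) (X : Set R), c • cl X = cl (c • X)
  zero_mem : ∀ X : Set R, (0 : R) ∈ cl X
  add_mem : ∀ X : Set R, ∀ a ∈ cl X, ∀ b ∈ cl X, a + b ∈ cl X
  mul_mem : ∀ (X : Set R) (r : R), ∀ a ∈ cl X, r * a ∈ cl X

variable {R : Type*} [CommRing R] [IsDomain R]

/-- `I` is a nonzero `r`-ideal, i.e. an element of the semigroup `I_r(R)`. -/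
def IdealSystem.IsRIdeal (rs : IdealSystem R) (I : Set R) : Prop :=
  rs.cl I = I ∧ I ≠ {0}

/-- The closure operation of the induced ideal system `r_m` on the localization
`R_m` at a prime `m`, applied to an ideal `J` of `R_m`: it is the localization
`((J ∩ R)_r)_m` of the `r`-closure of the contraction of `J`. -/
def IdealSystem.locCl (rs : IdealSystem R) (m : Ideal R) [m.IsPrime]
    (J : Ideal (Localization.AtPrime m)) : Set (Localization.AtPrime m) :=
  {x | ∃ a ∈ rs.cl ((algebraMap R (Localization.AtPrime m)) ⁻¹' (J : Set (Localization.AtPrime m))),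
      ∃ s ∈ m.primeCompl,
        x * algebraMap R (Localization.AtPrime m) s = algebraMap R (Localization.AtPrime m) a}

namespace IdealSystem

lemma cl_mono' (rs : IdealSystem R) {X Y : Set R} (h : X ⊆ Y) : rs.cl X ⊆ rs.cl Y :=
  rs.cl_mono X Y (h.trans (rs.subset_cl Y))

lemma cl_idem (rs : IdealSystem R) (X : Set R) : rs.cl (rs.cl X) = rs.cl X :=
  Set.Subset.antisymm (rs.cl_mono _ _ (subset_refl _)) (rs.subset_cl _)

def toIdeal (rs : IdealSystem R) (X : Set R) (h : rs.cl X = X) : Ideal R where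
  carrier := X
  zero_mem' := by show (0:R) ∈ X; rw [← h]; exact rs.zero_mem X
  add_mem' := fun {a b} ha hb => by
    show a + b ∈ X; rw [← h]
    exact rs.add_mem X a (by rw [h]; exact ha) b (by rw [h]; exact hb)
  smul_mem' := fun c a ha => by
    have : c * a ∈ rs.cl X := rs.mul_mem X c a (h.symm ▸ ha)
    simpa [smul_eq_mul, h] using this

@[simp] lemma mem_toIdeal (rs : IdealSystem R) (X : Set R) (h : rs.cl X = X) (a : R) :
    a ∈ rs.toIdeal X h ↔ a ∈ X := Iff.rfl

@[simp] lemma coe_toIdeal (rs : IdealSystem R) (X : Set R) (h : rs.cl X = X) :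
    ((rs.toIdeal X h : Ideal R) : Set R) = X := rfl

lemma mul_mem_cl_mul (rs : IdealSystem R) (X Y : Set R) :
    ∀ x ∈ rs.cl X, ∀ y ∈ rs.cl Y, x * y ∈ rs.cl (X * Y) := by
  have step1 : ∀ x0 ∈ X, ∀ y ∈ rs.cl Y, x0 * y ∈ rs.cl (X * Y) := by
    intro x0 hx0 y hy
    have h1 : x0 * y ∈ x0 • rs.cl Y := ⟨y, hy, rfl⟩
    rw [rs.smul_cl] at h1
    have h2 : x0 • Y ⊆ X * Y := by
      rintro _ ⟨y0, hy0, rfl⟩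
      exact Set.mul_mem_mul hx0 hy0
    exact rs.cl_mono' h2 h1
  intro x hx y hy
  have h1 : y * x ∈ y • rs.cl X := ⟨x, hx, rfl⟩
  rw [rs.smul_cl] at h1
  have h2 : y • X ⊆ rs.cl (X * Y) := by
    rintro _ ⟨x0, hx0, rfl⟩
    have := step1 x0 hx0 y hy
    simpa [smul_eq_mul, mul_comm] using this
  have := rs.cl_mono _ _ h2 h1
  rw [mul_comm x y]; exact this

lemma locCl_map (rs : IdealSystem R)
    (hfin : ∀ (X : Set R), ∀ x ∈ rs.cl X, ∃ E : Finset R, ↑E ⊆ X ∧ x ∈ rs.cl ↑E)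
    (m : Ideal R) [m.IsPrime] (hle : m.primeCompl ≤ nonZeroDivisors R)
    (L : Ideal R) (C : Set R) (hC : rs.cl ↑L = C) (hCcl : rs.cl C = C) :
    rs.locCl m (Ideal.map (algebraMap R (Localization.AtPrime m)) L)
      = ↑(Ideal.map (algebraMap R (Localization.AtPrime m)) (rs.toIdeal C hCcl)) := by
  set f := algebraMap R (Localization.AtPrime m) with hf
  have inj : Function.Injective f := IsLocalization.injective _ hle
  set sat : Set R := f ⁻¹' ↑(Ideal.map f L) with hsat
  have satIff : ∀ a : R, a ∈ sat ↔ ∃ s ∈ m.primeCompl, s * a ∈ L := by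
    intro a
    constructor
    · intro ha
      obtain ⟨⟨b, s⟩, h⟩ := (IsLocalization.mem_map_algebraMap_iff m.primeCompl _).mp ha
      refine ⟨s, s.2, ?_⟩
      have : f (a * s) = f b := by rw [map_mul]; exact h
      have := inj this
      rw [mul_comm]
      exact this ▸ b.2
    · rintro ⟨s, hs, hsa⟩
      refine (IsLocalization.mem_map_algebraMap_iff m.primeCompl _).mpr
        ⟨⟨⟨s * a, hsa⟩, ⟨s, hs⟩⟩, ?_⟩
      simp only [← map_mul]
      exact (map_mul f a s).symm.trans (congrArg f (mul_comm _ _))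
  -- cl sat ⊆ { a | ∃ s ∉ m, s * a ∈ C }
  have clsat : ∀ a ∈ rs.cl sat, ∃ s ∈ m.primeCompl, s * a ∈ C := by
    intro a ha
    obtain ⟨E, hE, haE⟩ := hfin sat a ha
    have hEprodGen : ∀ E : Finset R, (E : Set R) ⊆ sat →
        ∃ s ∈ m.primeCompl, ∀ e ∈ E, s * e ∈ L := by
      classical
      intro E
      induction E using Finset.induction_on with
      | empty => exact fun _ => ⟨1, m.primeCompl.one_mem, by simp⟩
      | @insert e E' hx ih =>
        intro hE
        have hE' : (E' : Set R) ⊆ sat := by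
          intro x hx'; exact hE (by simp [hx'])
        obtain ⟨s, hs, hsL⟩ := ih hE'
        obtain ⟨t, ht, hte⟩ := (satIff e).mp (hE (by simp))
        refine ⟨s * t, m.primeCompl.mul_mem hs ht, ?_⟩
        intro x hx'
        rcases Finset.mem_insert.mp hx' with rfl | hx'
        · have : s * (t * x) ∈ L := L.mul_mem_left s hte
          rwa [← mul_assoc] at this
        · have : t * (s * x) ∈ L := L.mul_mem_left t (hsL x hx')
          rw [show s * t * x = t * (s * x) by ring]
          exact this
    obtain ⟨s, hs, hsL⟩ := hEprodGen E hE
    refine ⟨s, hs, ?_⟩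
    have h1 : s * a ∈ s • rs.cl (E : Set R) := ⟨a, haE, rfl⟩
    rw [rs.smul_cl] at h1
    have h2 : s • (E : Set R) ⊆ (L : Set R) := by
      rintro _ ⟨e, he, rfl⟩
      exact hsL e he
    have := rs.cl_mono _ _ (h2.trans (rs.subset_cl _)) h1
    rwa [hC] at this
  ext x
  constructor
  · rintro ⟨a, ha, s, hs, hx⟩
    obtain ⟨t, ht, hta⟩ := clsat a ha
    refine (IsLocalization.mem_map_algebraMap_iff m.primeCompl _).mpr
      ⟨⟨⟨t * a, hta⟩, ⟨s * t, m.primeCompl.mul_mem hs ht⟩⟩, ?_⟩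
    show x * f (s * t) = f (t * a)
    rw [map_mul, map_mul, ← mul_assoc, hx, mul_comm (f a) (f t)]
  · intro hx
    obtain ⟨⟨a, s⟩, h⟩ := (IsLocalization.mem_map_algebraMap_iff m.primeCompl _).mp hx
    refine ⟨a, ?_, s, s.2, h⟩
    have : (C : Set R) ⊆ rs.cl sat := by
      rw [← hC]
      refine rs.cl_mono' ?_
      intro b hb
      show f b ∈ (Ideal.map f L : Set _)
      exact Ideal.mem_map_of_mem f hb
    exact this a.2

end IdealSystem

/-- Let `r` be a finitary ideal system on the domain `R`. If for every `r`-maximal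
`r`-ideal `m` of `R` the localized ideal semigroup `I_{r_m}(R_m)` is unit-cancellative,
then `I_r(R)` is unit-cancellative. -/
theorem unitCancellative_of_local (rs : IdealSystem R)
    (hfin : ∀ (X : Set R), ∀ x ∈ rs.cl X, ∃ E : Finset R, ↑E ⊆ X ∧ x ∈ rs.cl ↑E)
    (hloc : ∀ (m : Ideal R) [m.IsPrime], rs.cl ↑m = (m : Set R) →
      (m : Set R) ≠ Set.univ →
      (∀ J : Set R, rs.cl J = J → J ≠ Set.univ → (m : Set R) ⊆ J → J = ↑m) →
      ∀ I J : Ideal (Localization.AtPrime m), I ≠ ⊥ → J ≠ ⊥ →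
        rs.locCl m I = (I : Set (Localization.AtPrime m)) →
        rs.locCl m J = (J : Set (Localization.AtPrime m)) →
        rs.locCl m (I * J) = (I : Set (Localization.AtPrime m)) → J = ⊤) :
    ∀ I J : Set R, rs.IsRIdeal I → rs.IsRIdeal J → rs.cl (I * J) = I →
      J = Set.univ := by
  intro I J hI hJ hIJ
  by_contra hJuniv
  have univ_of_one : ∀ K : Set R, rs.cl K = K → (1 : R) ∈ K → K = Set.univ := by
    intro K hK h1
    apply Set.eq_univ_of_forall
    intro r
    have : r * 1 ∈ rs.cl K := rs.mul_mem K r 1 (hK.symm ▸ h1)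
    rwa [mul_one, hK] at this
  have h1J : (1 : R) ∉ J := fun h => hJuniv (univ_of_one J hJ.1 h)
  set S : Set (Set R) := {K | rs.cl K = K ∧ (1 : R) ∉ K ∧ J ⊆ K} with hS
  have hJS : J ∈ S := ⟨hJ.1, h1J, subset_refl _⟩
  obtain ⟨M, hJM, hMS, hMmax⟩ : ∃ M, J ⊆ M ∧ Maximal (· ∈ S) M := by
    apply zorn_subset_nonempty
    · intro c hcS hchain hcne
      refine ⟨⋃₀ c, ⟨?_, ?_, ?_⟩, fun s hs => Set.subset_sUnion_of_mem hs⟩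
      · apply Set.Subset.antisymm _ (rs.subset_cl _)
        intro x hx
        obtain ⟨E, hE, hxE⟩ := hfin _ x hx
        have hE' : (E : Set R) ⊆ ⋃ K ∈ c, K := by rwa [← Set.sUnion_eq_biUnion]
        obtain ⟨K, hKc, hEK⟩ :=
          (hchain.directedOn).exists_mem_subset_of_finset_subset_biUnion hcne hE'
        have : x ∈ rs.cl K := rs.cl_mono' hEK hxE
        rw [(hcS hKc).1] at this
        exact Set.mem_sUnion.mpr ⟨K, hKc, this⟩
      · rintro ⟨K, hKc, h1K⟩
        exact (hcS hKc).2.1 h1K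
      · obtain ⟨K, hKc⟩ := hcne
        exact (hcS hKc).2.2.trans (Set.subset_sUnion_of_mem hKc)
    · exact hJS
  obtain ⟨hMcl, h1M, hJsubM⟩ := hMS
  have hMmax' : ∀ K : Set R, rs.cl K = K → K ≠ Set.univ → M ⊆ K → K = M := by
    intro K hKcl hKuniv hMK
    have h1K : (1 : R) ∉ K := fun h => hKuniv (univ_of_one K hKcl h)
    exact le_antisymm (hMmax ⟨hKcl, h1K, hJM.trans hMK⟩ hMK) hMK
  have hMuniv : M ≠ Set.univ := fun h => h1M (h ▸ Set.mem_univ 1)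
  set mI : Ideal R := rs.toIdeal M hMcl with hmI
  have hsatM : ∀ a : R, a ∉ M → (1 : R) ∈ rs.cl (M ∪ {a}) := by
    intro a haM
    by_contra h1
    have hK : rs.cl (M ∪ {a}) = M :=
      hMmax' _ (rs.cl_idem _) (fun h => h1 (h ▸ Set.mem_univ 1))
        ((Set.subset_union_left).trans (rs.subset_cl _))
    exact haM (hK ▸ rs.subset_cl (M ∪ {a}) (Set.mem_union_right _ rfl))
  haveI hmprime : mI.IsPrime := by
    constructor
    · intro h
      exact h1M ((Ideal.eq_top_iff_one mI).mp h)
    · intro a b hab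
      by_contra h
      push_neg at h
      obtain ⟨haM, hbM⟩ := h
      have h1a := hsatM a haM
      have h1b := hsatM b hbM
      have key : (1 : R) * 1 ∈ rs.cl ((M ∪ {a}) * (M ∪ {b})) :=
        rs.mul_mem_cl_mul _ _ 1 h1a 1 h1b
      have hsub : (M ∪ {a}) * (M ∪ {b}) ⊆ M := by
        rintro _ ⟨u, hu, v, hv, rfl⟩
        show u * v ∈ M
        rcases hu with hu | hu
        · have huv : v * u ∈ rs.cl M := rs.mul_mem M v u (hMcl.symm ▸ hu)
          rw [hMcl] at huv
          rwa [mul_comm u v]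
        · rcases hv with hv | hv
          · have huv : u * v ∈ rs.cl M := rs.mul_mem M u v (hMcl.symm ▸ hv)
            rwa [hMcl] at huv
          · simp only [Set.mem_singleton_iff] at hu hv
            subst hu; subst hv; exact hab
      have h1M' : (1 : R) * 1 ∈ M := by
        have := rs.cl_mono _ _ (hsub.trans (rs.subset_cl _)) key
        rwa [hMcl] at this
      rw [one_mul] at h1M'
      exact h1M h1M'
  have hle : mI.primeCompl ≤ nonZeroDivisors R := by
    intro s hs
    have h0 : s ≠ 0 := by
      rintro rfl
      exact hs (show (0:R) ∈ M from hMcl ▸ rs.zero_mem M)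
    exact mem_nonZeroDivisors_of_ne_zero h0
  set f := algebraMap R (Localization.AtPrime mI) with hfdef
  have inj : Function.Injective f := IsLocalization.injective _ hle
  set LI : Ideal R := rs.toIdeal I hI.1 with hLI
  set LJ : Ideal R := rs.toIdeal J hJ.1 with hLJ
  set I' : Ideal (Localization.AtPrime mI) := Ideal.map f LI with hI'
  set J' : Ideal (Localization.AtPrime mI) := Ideal.map f LJ with hJ'
  have exNZ : ∀ K : Set R, rs.IsRIdeal K → ∃ a ∈ K, a ≠ 0 := by
    intro K hK
    by_contra h
    push_neg at h
    apply hK.2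
    apply Set.Subset.antisymm
    · intro x hx; exact h x hx
    · intro x hx; simp only [Set.mem_singleton_iff] at hx
      rw [hx, ← hK.1]; exact rs.zero_mem K
  have neBot : ∀ (K : Set R) (hK : rs.IsRIdeal K),
      Ideal.map f (rs.toIdeal K hK.1) ≠ ⊥ := by
    intro K hK hbot
    obtain ⟨a, haK, ha0⟩ := exNZ K hK
    have hfa : f a ∈ Ideal.map f (rs.toIdeal K hK.1) := Ideal.mem_map_of_mem f haK
    rw [hbot, Ideal.mem_bot] at hfa
    exact ha0 (inj (by rw [hfa, map_zero]))
  have hclI' : rs.locCl mI I' = (I' : Set (Localization.AtPrime mI)) :=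
    rs.locCl_map hfin mI hle LI I hI.1 hI.1
  have hclJ' : rs.locCl mI J' = (J' : Set (Localization.AtPrime mI)) :=
    rs.locCl_map hfin mI hle LJ J hJ.1 hJ.1
  -- the product ideal
  have hLprod : rs.cl ↑(LI * LJ) = I := by
    apply Set.Subset.antisymm
    · have hsub : ((LI * LJ : Ideal R) : Set R) ⊆ I := by
        have : LI * LJ ≤ rs.toIdeal I hI.1 := by
          apply Ideal.mul_le.mpr
          intro r hr s hs
          have : s * r ∈ rs.cl I := rs.mul_mem I s r (hI.1.symm ▸ hr)
          rw [hI.1] at this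
          rwa [mul_comm s r] at this
        exact this
      have := rs.cl_mono _ _ (hsub.trans (rs.subset_cl I)) 
      rwa [hI.1] at this
    · rw [← hIJ]
      apply rs.cl_mono'
      rintro _ ⟨u, hu, v, hv, rfl⟩
      exact Ideal.mul_mem_mul (show u ∈ LI from hu) (show v ∈ LJ from hv)
  have hclprod : rs.locCl mI (I' * J') = (I' : Set (Localization.AtPrime mI)) := by
    have hmap : I' * J' = Ideal.map f (LI * LJ) := (Ideal.map_mul f LI LJ).symm
    rw [hmap]
    have := rs.locCl_map hfin mI hle (LI * LJ) I hLprod hI.1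
    rw [this]
  have hJtop : J' = ⊤ := by
    refine hloc mI hMcl hMuniv ?_ I' J' (neBot I hI) (neBot J hJ) hclI' hclJ' hclprod
    intro K hKcl hKuniv hMK
    exact hMmax' K hKcl hKuniv hMK
  -- contradiction
  have h1J' : (1 : Localization.AtPrime mI) ∈ J' := hJtop ▸ Submodule.mem_top
  obtain ⟨⟨b, s⟩, hb⟩ := (IsLocalization.mem_map_algebraMap_iff mI.primeCompl _).mp h1J'
  have : (s : R) = b := by
    apply inj
    simp at hb
    exact congrArg f hb
  have hsM : (s : R) ∈ M := by
    rw [this]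
    exact hJsubM b.2
  exact s.2 hsM
end

section
/- Let H₁ and H₂ be atomic commutative unit-cancellative monoids, each satisfying the Structure Theorem for Sets of Lengths and having finite weak successive distance δ_w. Then the direct product H₁ × H₂ has finite weak successive distance: there exists a constant C such that for every a ∈ H₁ × H₂ and all k, ℓ ∈ L(a), d(Z_k(a), Z_ℓ(a)) ≤ C·|ℓ − k|. -/
/-- `s` is a factorization of `a`: a multiset of atoms of the reduced monoid
`H_red = Associates H` whose product is the class of `a`. -/
def IsFactorizationOf {H : Type*} [CommMonoid H]
    (s : Multiset (Associates H)) (a : H) : Prop :=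
  (∀ x ∈ s, Irreducible x) ∧ s.prod = Associates.mk a

/-- The set of lengths `L(a)` of `a`. -/
def Lengths {H : Type*} [CommMonoid H] (a : H) : Set ℕ :=
  {n | ∃ s : Multiset (Associates H), IsFactorizationOf s a ∧ s.card = n}

/-- The distance between two factorizations:
`d(z,z') = max {|z ⬝ gcd(z,z')⁻¹|, |z' ⬝ gcd(z,z')⁻¹|}`. -/
def factorizationDist {H : Type*} [CommMonoid H] [DecidableEq (Associates H)]
    (s t : Multiset (Associates H)) : ℕ :=
  max (s - t).card (t - s).card

/-- `k` and `l` are adjacent lengths of `a`: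
`L(a) ∩ [min {k,l}, max {k,l}] = {k, l}` with `k ≠ l`. -/
def AdjacentLengths {H : Type*} [CommMonoid H] (a : H) (k l : ℕ) : Prop :=
  k ≠ l ∧ k ∈ Lengths a ∧ l ∈ Lengths a ∧
    ∀ m ∈ Lengths a, min k l ≤ m → m ≤ max k l → m = k ∨ m = l

/-- `L` is an almost arithmetical multiprogression (AAMP) with difference `d` and
bound `M`. -/
def IsAAMP (L : Set ℤ) (d : ℕ) (M : ℕ) : Prop :=
  ∃ (D : Set ℤ) (y : ℤ) (L' Lstar L'' : Set ℤ) (m : ℤ),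
    0 ∈ D ∧ (d : ℤ) ∈ D ∧ D ⊆ Set.Icc 0 (d : ℤ) ∧
    m ∈ Lstar ∧
    Lstar = {x | (∃ u ∈ D, ∃ k : ℤ, x = u + d * k) ∧ 0 ≤ x ∧ x ≤ m} ∧
    L' ⊆ Set.Icc (-(M : ℤ)) (-1) ∧
    L'' ⊆ Set.Icc (m + 1) (m + M) ∧
    (∀ x ∈ L' ∪ Lstar ∪ L'', ∃ u ∈ D, ∃ k : ℤ, x = u + d * k) ∧
    L = (fun x => y + x) '' (L' ∪ Lstar ∪ L'')

/-- `H` satisfies the Structure Theorem for Sets of Lengths: there are a bound `M`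
and a finite nonempty set `Δ ⊆ ℕ` of differences such that every set of lengths is
an AAMP with some difference `d ∈ Δ` and bound `M`. -/
def SatisfiesSTSL (H : Type*) [CommMonoid H] : Prop :=
  ∃ (M : ℕ) (Δ : Finset ℕ), Δ.Nonempty ∧ (∀ d ∈ Δ, 1 ≤ d) ∧
    ∀ a : H, ∃ d ∈ Δ, IsAAMP ((fun n : ℕ => (n : ℤ)) '' Lengths a) d M

/-- `H` has weak successive distance bounded by `N`:
`d(Z_k(a), Z_l(a)) ≤ N·|l - k|` for all `a ∈ H` and `k, l ∈ L(a)`. -/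
def WeakSuccDistBound (H : Type*) [CommMonoid H] [DecidableEq (Associates H)]
    (N : ℕ) : Prop :=
  ∀ (a : H) (k l : ℕ), k ∈ Lengths a → l ∈ Lengths a →
    ∃ x y : Multiset (Associates H), IsFactorizationOf x a ∧ IsFactorizationOf y a ∧
      x.card = k ∧ y.card = l ∧
      factorizationDist x y ≤ N * ((l : ℤ) - (k : ℤ)).natAbs

lemma aamp_mono {L : Set ℤ} {d M M' : ℕ} (h : IsAAMP L d M) (hMM : M ≤ M') : IsAAMP L d M' := by
  obtain ⟨D, y, L', Lstar, L'', m, h1, h2, h3, h4, h5, h6, h7, h8, h9⟩ := h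
  refine ⟨D, y, L', Lstar, L'', m, h1, h2, h3, h4, h5, ?_, ?_, h8, h9⟩
  · refine subset_trans h6 (Set.Icc_subset_Icc ?_ le_rfl)
    have : (M:ℤ) ≤ M' := by exact_mod_cast hMM
    linarith
  · refine subset_trans h7 (Set.Icc_subset_Icc le_rfl ?_)
    have : (M:ℤ) ≤ M' := by exact_mod_cast hMM
    linarith

/-- Unpacked form of the AAMP structure that we actually use. -/
lemma aamp_spec {L : Set ℤ} {d M : ℕ} (h : IsAAMP L d M) :
    ∃ y m : ℤ, 0 ≤ m ∧
      (∀ x ∈ L, y - M ≤ x ∧ x ≤ y + m + M) ∧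
      (∀ x ∈ L, ∀ j : ℤ, y ≤ x + j * d → x + j * d ≤ y + m → x + j * d ∈ L) := by
  obtain ⟨D, y, L', Lstar, L'', m, _, _, _, hmLs, hLs, hL', hL'', hform, hL⟩ := h
  have hm0 : 0 ≤ m := by
    rw [hLs] at hmLs; exact hmLs.2.1
  refine ⟨y, m, hm0, ?_, ?_⟩
  · rintro x hx
    rw [hL] at hx
    obtain ⟨w, hw, hxw⟩ := hx
    replace hxw : y + w = x := hxw
    subst hxw
    have hM0 : (0:ℤ) ≤ (M:ℤ) := Int.natCast_nonneg M
    rcases hw with (hw | hw) | hw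
    · have := hL' hw; simp only [Set.mem_Icc] at this; constructor <;> linarith [this.1, this.2]
    · rw [hLs] at hw; constructor <;> linarith [hw.2.1, hw.2.2]
    · have := hL'' hw; simp only [Set.mem_Icc] at this; constructor <;> linarith [this.1, this.2]
  · rintro x hx j h1 h2
    rw [hL] at hx
    obtain ⟨w, hw, hxw⟩ := hx
    replace hxw : y + w = x := hxw
    subst hxw
    obtain ⟨u, hu, k, hk⟩ := hform w hw
    have hmem : w + j * d ∈ Lstar := by
      rw [hLs]
      refine ⟨⟨u, hu, k + j, by rw [hk]; ring⟩, by linarith, by linarith⟩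
    rw [hL]
    exact ⟨w + j * d, Or.inl (Or.inr hmem), by show y + (w + j * d) = y + w + j * d; ring⟩

/-- The interval-selection core lemma. -/
lemma key_aux {L₁ L₂ : Set ℤ} {M D : ℤ} {y₁ m₁ y₂ m₂ k₁ l₁ k₂ l₂ t : ℤ}
    (hM : 0 ≤ M) (hD : 1 ≤ D)
    (hb₁ : ∀ x ∈ L₁, y₁ - M ≤ x ∧ x ≤ y₁ + m₁ + M)
    (hc₁ : ∀ x ∈ L₁, ∀ j : ℤ, y₁ ≤ x + j * D → x + j * D ≤ y₁ + m₁ → x + j * D ∈ L₁)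
    (hb₂ : ∀ x ∈ L₂, y₂ - M ≤ x ∧ x ≤ y₂ + m₂ + M)
    (hc₂ : ∀ x ∈ L₂, ∀ j : ℤ, y₂ ≤ x + j * D → x + j * D ≤ y₂ + m₂ → x + j * D ∈ L₂)
    (hk₁ : k₁ ∈ L₁) (hl₁ : l₁ ∈ L₁) (hk₂ : k₂ ∈ L₂) (hl₂ : l₂ ∈ L₂)
    (ht : t = l₁ + l₂ - k₁ - k₂) (ht1 : 1 ≤ t)
    (hgap : l₁ - k₁ > t + 3 * (M + D))
    (hm₁ : m₁ > t + 5 * (M + D)) (hm₂ : m₂ > t + 5 * (M + D)) :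
    ∃ z : ℤ, z ∈ L₁ ∧ l₁ + l₂ - z ∈ L₂ ∧
      |z - k₁| ≤ t + (M + D) ∧ |l₁ + l₂ - z - k₂| ≤ 2 * t + (M + D) := by
  set l : ℤ := l₁ + l₂ with hl
  obtain ⟨hk₁b, hk₁b'⟩ := hb₁ k₁ hk₁
  obtain ⟨hl₁b, hl₁b'⟩ := hb₁ l₁ hl₁
  obtain ⟨hk₂b, hk₂b'⟩ := hb₂ k₂ hk₂
  obtain ⟨hl₂b, hl₂b'⟩ := hb₂ l₂ hl₂
  set A : ℤ := max y₁ (l - y₂ - m₂) with hA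
  set B : ℤ := min (y₁ + m₁) (l - y₂) with hB
  have hA1 : y₁ ≤ A := le_max_left _ _
  have hA2 : l - y₂ - m₂ ≤ A := le_max_right _ _
  have hB1 : B ≤ y₁ + m₁ := min_le_left _ _
  have hB2 : B ≤ l - y₂ := min_le_right _ _
  have hAk : A ≤ k₁ + t + M := max_le (by linarith) (by linarith)
  have hBk : k₁ - t - M ≤ B := le_min (by linarith) (by linarith)
  have hBm1 : y₁ + D ≤ B := le_min (by linarith) (by linarith)
  have hBm2 : l - y₂ - m₂ + D ≤ B := le_min (by linarith) (by linarith)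
  have hAB : A ≤ B - D := max_le (by linarith) (by linarith)
  set c : ℤ := max A (min k₁ (B - D + 1)) with hc
  have hcA : A ≤ c := le_max_left _ _
  have hcB : c ≤ B - D + 1 := max_le (by linarith) (min_le_right _ _)
  have hck : c ≤ k₁ + t + M := max_le hAk (le_trans (min_le_left _ _) (by linarith))
  have hkc : k₁ - t - M - D + 1 ≤ c :=
    le_trans (le_min (by linarith) (by linarith)) (le_max_right _ _)
  set r : ℤ := (l₁ - c) % D with hr
  set q : ℤ := (l₁ - c) / D with hq
  have hr0 : 0 ≤ r := Int.emod_nonneg _ (by omega)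
  have hrD : r < D := Int.emod_lt_of_pos _ (by omega)
  have heq : l₁ - c = D * q + r := (Int.mul_ediv_add_emod _ _).symm
  set z : ℤ := c + r with hzdef
  have hl₁eq : l₁ = c + D * q + r := by linarith
  have hz_eq : z = l₁ + (-q) * D := by rw [hzdef, hl₁eq]; ring
  have hzA : A ≤ z := by linarith
  have hzB : z ≤ B := by linarith
  have hzL₁ : z ∈ L₁ := by
    rw [hz_eq]
    exact hc₁ l₁ hl₁ (-q) (by rw [← hz_eq]; linarith) (by rw [← hz_eq]; linarith)
  have hlz_eq : l - z = l₂ + q * D := by rw [hz_eq]; ring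
  have hzL₂ : l - z ∈ L₂ := by
    rw [hlz_eq]
    exact hc₂ l₂ hl₂ q (by rw [← hlz_eq]; linarith) (by rw [← hlz_eq]; linarith)
  refine ⟨z, hzL₁, hzL₂, abs_le.2 ⟨by linarith, by linarith⟩,
    abs_le.2 ⟨by linarith, by linarith⟩⟩

/-- Key balancing lemma: given `k < l` in the sumset, rebalance the decomposition of `l`
so that both coordinates are close to those of `k`. -/
lemma key {L₁ L₂ : Set ℤ} {d₁ d₂ M : ℕ} (h₁ : IsAAMP L₁ d₁ M) (h₂ : IsAAMP L₂ d₂ M)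
    (hd₁ : 1 ≤ d₁) (hd₂ : 1 ≤ d₂) {k₁ l₁ k₂ l₂ : ℤ}
    (hk₁ : k₁ ∈ L₁) (hl₁ : l₁ ∈ L₁) (hk₂ : k₂ ∈ L₂) (hl₂ : l₂ ∈ L₂)
    (hkl : k₁ + k₂ < l₁ + l₂) :
    ∃ l₁' l₂' : ℤ, l₁' ∈ L₁ ∧ l₂' ∈ L₂ ∧ l₁' + l₂' = l₁ + l₂ ∧
      |l₁' - k₁| ≤ (7 * ((M : ℤ) + d₁ * d₂) + 2) * (l₁ + l₂ - k₁ - k₂) ∧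
      |l₂' - k₂| ≤ (7 * ((M : ℤ) + d₁ * d₂) + 2) * (l₁ + l₂ - k₁ - k₂) := by
  obtain ⟨y₁, m₁, hm₁0, hb₁, hc₁⟩ := aamp_spec h₁
  obtain ⟨y₂, m₂, hm₂0, hb₂, hc₂⟩ := aamp_spec h₂
  set t : ℤ := l₁ + l₂ - k₁ - k₂ with htdef
  have ht1 : 1 ≤ t := by omega
  set D : ℤ := (d₁ : ℤ) * d₂ with hDdef
  have hD1 : 1 ≤ D := by
    have : (1:ℤ) ≤ d₁ := by exact_mod_cast hd₁
    have : (1:ℤ) ≤ d₂ := by exact_mod_cast hd₂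
    nlinarith [Int.natCast_nonneg d₁, Int.natCast_nonneg d₂]
  have hM0 : (0:ℤ) ≤ M := Int.natCast_nonneg M
  set E : ℤ := (M : ℤ) + D with hEdef
  have hE1 : 1 ≤ E := by omega
  set C : ℤ := 7 * E + 2 with hCdef
  -- closure under steps of D in both sets
  have hc₁D : ∀ x ∈ L₁, ∀ j : ℤ, y₁ ≤ x + j * D → x + j * D ≤ y₁ + m₁ → x + j * D ∈ L₁ := by
    intro x hx j hj1 hj2
    have hxe : x + j * (d₂:ℤ) * (d₁:ℤ) = x + j * D := by rw [hDdef]; ring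
    have h := hc₁ x hx (j * d₂) (by rw [hxe]; exact hj1) (by rw [hxe]; exact hj2)
    rwa [hxe] at h
  have hc₂D : ∀ x ∈ L₂, ∀ j : ℤ, y₂ ≤ x + j * D → x + j * D ≤ y₂ + m₂ → x + j * D ∈ L₂ := by
    intro x hx j hj1 hj2
    have hxe : x + j * (d₁:ℤ) * (d₂:ℤ) = x + j * D := by rw [hDdef]; ring
    have h := hc₂ x hx (j * d₁) (by rw [hxe]; exact hj1) (by rw [hxe]; exact hj2)
    rwa [hxe] at h
  obtain ⟨hk₁b, hk₁b'⟩ := hb₁ k₁ hk₁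
  obtain ⟨hl₁b, hl₁b'⟩ := hb₁ l₁ hl₁
  obtain ⟨hk₂b, hk₂b'⟩ := hb₂ k₂ hk₂
  obtain ⟨hl₂b, hl₂b'⟩ := hb₂ l₂ hl₂
  have hl₂k₂ : l₂ - k₂ = t - (l₁ - k₁) := by rw [htdef]; ring
  have hEt : E ≤ E * t := le_mul_of_one_le_right (by linarith) ht1
  have hCt : C * t = 7*(E*t) + 2*t := by rw [hCdef]; ring
  have hME : (M:ℤ) ≤ E := by rw [hEdef]; linarith
  by_cases hcase : -(t + 3*E) ≤ l₁ - k₁ ∧ l₁ - k₁ ≤ t + 3*E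
  · refine ⟨l₁, l₂, hl₁, hl₂, rfl, abs_le.2 ⟨by linarith [hEt, hCt, hcase.1], by linarith [hEt, hCt, hcase.2]⟩,
      abs_le.2 ⟨by linarith [hEt, hCt, hcase.2], by linarith [hEt, hCt, hcase.1]⟩⟩
  by_cases hm1 : m₁ ≤ t + 5*E
  · refine ⟨l₁, l₂, hl₁, hl₂, rfl,
      abs_le.2 ⟨by linarith [hEt, hCt, hME], by linarith [hEt, hCt, hME]⟩,
      abs_le.2 ⟨by linarith [hEt, hCt, hME], by linarith [hEt, hCt, hME]⟩⟩
  by_cases hm2 : m₂ ≤ t + 5*E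
  · refine ⟨l₁, l₂, hl₁, hl₂, rfl,
      abs_le.2 ⟨by linarith [hEt, hCt, hME], by linarith [hEt, hCt, hME]⟩,
      abs_le.2 ⟨by linarith [hEt, hCt, hME], by linarith [hEt, hCt, hME]⟩⟩
  push_neg at hcase hm1 hm2
  by_cases hsign : l₁ - k₁ > t + 3*E
  · obtain ⟨z, hz1, hz2, hz3, hz4⟩ := key_aux hM0 hD1 hb₁ hc₁D hb₂ hc₂D hk₁ hl₁ hk₂ hl₂
      htdef ht1 (by rw [hEdef] at hsign; exact hsign)
      (by rw [hEdef] at hm1; exact hm1) (by rw [hEdef] at hm2; exact hm2)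
    rw [← hEdef] at hz3 hz4
    refine ⟨z, l₁ + l₂ - z, hz1, hz2, by ring, ?_, ?_⟩
    · refine le_trans hz3 (by linarith [hEt, hCt])
    · refine le_trans hz4 (by linarith [hEt, hCt])
  · have hsign' : l₂ - k₂ > t + 3*E := by
      rcases lt_or_ge (l₁ - k₁) (-(t + 3*E)) with h | h
      · rw [hl₂k₂]; linarith
      · exact absurd (hcase h) (by linarith [hsign])
    obtain ⟨z, hz1, hz2, hz3, hz4⟩ := key_aux hM0 hD1 hb₂ hc₂D hb₁ hc₁D hk₂ hl₂ hk₁ hl₁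
      (by linarith) ht1 (by rw [hEdef] at hsign'; exact hsign')
      (by rw [hEdef] at hm2; exact hm2) (by rw [hEdef] at hm1; exact hm1)
    rw [← hEdef] at hz3 hz4
    have hz2' : l₁ + l₂ - z ∈ L₁ := by
      rwa [show l₁ + l₂ - z = l₂ + l₁ - z from by ring]
    refine ⟨l₁ + l₂ - z, z, hz2', hz1, by ring, ?_, ?_⟩
    · refine le_trans (le_of_eq (by rw [show l₁ + l₂ - z - k₁ = l₂ + l₁ - z - k₁ from by ring]))
        (le_trans hz4 (by linarith [hEt, hCt]))
    · refine le_trans hz3 (by linarith [hEt, hCt])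

section MultisetLemmas
variable {α β : Type*} [DecidableEq α] [DecidableEq β]

lemma map_sub_of_injective (f : α → β) (hf : Function.Injective f) (s t : Multiset α) :
    (s - t).map f = s.map f - t.map f := by
  ext y
  by_cases hy : ∃ x, f x = y
  · obtain ⟨x, rfl⟩ := hy
    simp [Multiset.count_sub, Multiset.count_map_eq_count' f _ hf]
  · rw [Multiset.count_sub, Multiset.count_eq_zero.2, Multiset.count_eq_zero.2,
      Multiset.count_eq_zero.2] <;>
    · intro h
      obtain ⟨x, _, rfl⟩ := Multiset.mem_map.1 h
      exact hy ⟨x, rfl⟩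

lemma sub_add_sub_disjoint (A A' B B' : Multiset α)
    (h : ∀ x : α, (Multiset.count x B = 0 ∧ Multiset.count x B' = 0) ∨
      (Multiset.count x A = 0 ∧ Multiset.count x A' = 0)) :
    (A + B) - (A' + B') = (A - A') + (B - B') := by
  ext x
  simp only [Multiset.count_sub, Multiset.count_add]
  rcases h x with ⟨h1, h2⟩ | ⟨h1, h2⟩ <;> omega

end MultisetLemmas

section AssocEquiv
variable {M N : Type*} [CommMonoid M] [CommMonoid N]

noncomputable def assocProdHom : Associates (M × N) →* Associates M × Associates N where
  toFun := Quotient.lift (fun p : M × N => (Associates.mk p.1, Associates.mk p.2))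
    (by
      rintro a b hab
      have h1 : Associated a.1 b.1 := Associated.map (MonoidHom.fst M N) hab
      have h2 : Associated a.2 b.2 := Associated.map (MonoidHom.snd M N) hab
      simp only [Prod.ext_iff]
      exact ⟨Associates.mk_eq_mk_iff_associated.2 h1, Associates.mk_eq_mk_iff_associated.2 h2⟩)
  map_one' := rfl
  map_mul' := by rintro ⟨a⟩ ⟨b⟩; rfl

@[simp] lemma assocProdHom_mk (p : M × N) :
    assocProdHom (Associates.mk p) = (Associates.mk p.1, Associates.mk p.2) := rfl

lemma assocProdHom_bijective :
    Function.Bijective (assocProdHom : Associates (M × N) → Associates M × Associates N) := by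
  constructor
  · intro x y hxy
    obtain ⟨a, rfl⟩ := Associates.mk_surjective x
    obtain ⟨b, rfl⟩ := Associates.mk_surjective y
    simp only [assocProdHom_mk, Prod.ext_iff] at hxy
    obtain ⟨u, hu⟩ := Associates.mk_eq_mk_iff_associated.1 hxy.1
    obtain ⟨v, hv⟩ := Associates.mk_eq_mk_iff_associated.1 hxy.2
    exact Associates.mk_eq_mk_iff_associated.2
      ⟨⟨(u.val, v.val), (u.inv, v.inv), by ext <;> simp [u.val_inv, v.val_inv],
        by ext <;> simp [u.inv_val, v.inv_val]⟩, by ext <;> simp [hu, hv]⟩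
  · rintro ⟨x, y⟩
    obtain ⟨a, rfl⟩ := Associates.mk_surjective x
    obtain ⟨b, rfl⟩ := Associates.mk_surjective y
    exact ⟨Associates.mk (a, b), rfl⟩

noncomputable def assocProdEquiv : Associates (M × N) ≃* Associates M × Associates N :=
  MulEquiv.ofBijective assocProdHom assocProdHom_bijective

@[simp] lemma assocProdEquiv_mk (p : M × N) :
    assocProdEquiv (Associates.mk p) = (Associates.mk p.1, Associates.mk p.2) := rfl

@[simp] lemma assocProdEquiv_symm_mk (a : M) (b : N) :
    assocProdEquiv.symm (Associates.mk a, Associates.mk b) = Associates.mk (a, b) := by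
  rw [MulEquiv.symm_apply_eq]; rfl

end AssocEquiv

section ProdIrred
variable {M N : Type*} [CommMonoid M] [CommMonoid N]

lemma isUnit_prod_iff {p : M × N} : IsUnit p ↔ IsUnit p.1 ∧ IsUnit p.2 := by
  constructor
  · intro h
    exact ⟨h.map (MonoidHom.fst M N), h.map (MonoidHom.snd M N)⟩
  · rintro ⟨⟨u, hu⟩, ⟨v, hv⟩⟩
    exact ⟨⟨(u.val, v.val), (u.inv, v.inv), by ext <;> simp [u.val_inv, v.val_inv],
      by ext <;> simp [u.inv_val, v.inv_val]⟩, by ext <;> simp [hu, hv]⟩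

lemma prod_irreducible_iff {p : M × N} :
    Irreducible p ↔ (Irreducible p.1 ∧ IsUnit p.2) ∨ (IsUnit p.1 ∧ Irreducible p.2) := by
  constructor
  · intro hp
    have hsplit : p = (p.1, 1) * (1, p.2) := by simp [Prod.ext_iff]
    rcases hp.isUnit_or_isUnit hsplit with h | h
    · rw [isUnit_prod_iff] at h
      refine Or.inr ⟨h.1, ?_, ?_⟩
      · intro hu; exact hp.not_isUnit (isUnit_prod_iff.2 ⟨h.1, hu⟩)
      · intro a b hab
        have : p = (p.1, a) * (1, b) := by simp [Prod.ext_iff, hab]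
        rcases hp.isUnit_or_isUnit this with h' | h' <;> rw [isUnit_prod_iff] at h'
        · exact Or.inl h'.2
        · exact Or.inr h'.2
    · rw [isUnit_prod_iff] at h
      refine Or.inl ⟨⟨?_, ?_⟩, h.2⟩
      · intro hu; exact hp.not_isUnit (isUnit_prod_iff.2 ⟨hu, h.2⟩)
      · intro a b hab
        have : p = (a, 1) * (b, p.2) := by simp [Prod.ext_iff, hab]
        rcases hp.isUnit_or_isUnit this with h' | h' <;> rw [isUnit_prod_iff] at h'
        · exact Or.inl h'.1
        · exact Or.inr h'.1
  · rintro (⟨h1, h2⟩ | ⟨h1, h2⟩)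
    · constructor
      · intro hu; exact h1.not_isUnit (isUnit_prod_iff.1 hu).1
      · rintro ⟨a1, a2⟩ ⟨b1, b2⟩ hab
        rw [Prod.ext_iff] at hab
        rcases h1.isUnit_or_isUnit hab.1 with h | h
        · exact Or.inl (isUnit_prod_iff.2 ⟨h, isUnit_of_mul_isUnit_left (hab.2 ▸ h2)⟩)
        · exact Or.inr (isUnit_prod_iff.2 ⟨h, isUnit_of_mul_isUnit_right (hab.2 ▸ h2)⟩)
    · constructor
      · intro hu; exact h2.not_isUnit (isUnit_prod_iff.1 hu).2
      · rintro ⟨a1, a2⟩ ⟨b1, b2⟩ hab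
        rw [Prod.ext_iff] at hab
        rcases h2.isUnit_or_isUnit hab.2 with h | h
        · exact Or.inl (isUnit_prod_iff.2 ⟨isUnit_of_mul_isUnit_left (hab.1 ▸ h1), h⟩)
        · exact Or.inr (isUnit_prod_iff.2 ⟨isUnit_of_mul_isUnit_right (hab.1 ▸ h1), h⟩)

/-- Characterization of irreducibles in `Associates M × Associates N`. -/
lemma assoc_prod_irreducible_iff {p : Associates M × Associates N} :
    Irreducible p ↔ (Irreducible p.1 ∧ p.2 = 1) ∨ (p.1 = 1 ∧ Irreducible p.2) := by
  rw [prod_irreducible_iff, Associates.isUnit_iff_eq_one, Associates.isUnit_iff_eq_one]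

end ProdIrred

section Transfer
variable {H₁ H₂ : Type*} [CommMonoid H₁] [CommMonoid H₂]
  [DecidableEq (Associates H₁)] [DecidableEq (Associates H₂)]
  [DecidableEq (Associates (H₁ × H₂))]

/-- Decomposition of a factorization of a pair into factorizations of components. -/
lemma lengths_decomp {a₁ : H₁} {a₂ : H₂} {k : ℕ} (hk : k ∈ Lengths ((a₁, a₂) : H₁ × H₂)) :
    ∃ k₁ k₂ : ℕ, k₁ ∈ Lengths a₁ ∧ k₂ ∈ Lengths a₂ ∧ k = k₁ + k₂ := by
  obtain ⟨s, ⟨hirr, hprod⟩, hcard⟩ := hk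
  set s' : Multiset (Associates H₁ × Associates H₂) := s.map assocProdEquiv with hs'
  have hirr' : ∀ p ∈ s', Irreducible p := by
    intro p hp
    obtain ⟨x, hx, rfl⟩ := Multiset.mem_map.1 hp
    exact (MulEquiv.irreducible_iff (assocProdEquiv (M := H₁) (N := H₂))).2 (hirr x hx)
  have hprod' : s'.prod = (Associates.mk a₁, Associates.mk a₂) := by
    rw [hs', ← map_multiset_prod, hprod]
    exact assocProdEquiv_mk (a₁, a₂)
  classical
  set sA := s'.filter (fun p => p.2 = 1) with hsA
  set sB := s'.filter (fun p => ¬ p.2 = 1) with hsB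
  have hsplit : sA + sB = s' := Multiset.filter_add_not _ _
  refine ⟨sA.card, sB.card, ⟨sA.map Prod.fst, ⟨?_, ?_⟩, Multiset.card_map _ _⟩,
    ⟨sB.map Prod.snd, ⟨?_, ?_⟩, Multiset.card_map _ _⟩, ?_⟩
  · intro x hx
    obtain ⟨p, hp, rfl⟩ := Multiset.mem_map.1 hx
    obtain ⟨hps', hp2⟩ := Multiset.mem_filter.1 hp
    rcases assoc_prod_irreducible_iff.1 (hirr' p hps') with h | h
    · exact h.1
    · exact absurd (hp2 ▸ h.2) (by simp [hp2])
  · have h1 : (sA.map Prod.fst).prod * (sB.map Prod.fst).prod = Associates.mk a₁ := by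
      have hfst : (s'.map Prod.fst).prod = Associates.mk a₁ := by
        have h := Multiset.prod_hom s' (MonoidHom.fst (Associates H₁) (Associates H₂))
        simp only [MonoidHom.coe_fst] at h
        rw [h, hprod']
      rw [← Multiset.prod_add, ← Multiset.map_add, hsplit]
      exact hfst
    have h2 : (sB.map Prod.fst).prod = 1 := by
      apply Multiset.prod_eq_one
      intro x hx
      obtain ⟨p, hp, rfl⟩ := Multiset.mem_map.1 hx
      obtain ⟨hps', hp2⟩ := Multiset.mem_filter.1 hp
      rcases assoc_prod_irreducible_iff.1 (hirr' p hps') with h | h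
      · exact absurd h.2 hp2
      · exact h.1
    rw [h2, mul_one] at h1
    exact h1
  · intro x hx
    obtain ⟨p, hp, rfl⟩ := Multiset.mem_map.1 hx
    obtain ⟨hps', hp2⟩ := Multiset.mem_filter.1 hp
    rcases assoc_prod_irreducible_iff.1 (hirr' p hps') with h | h
    · exact absurd h.2 hp2
    · exact h.2
  · have h1 : (sA.map Prod.snd).prod * (sB.map Prod.snd).prod = Associates.mk a₂ := by
      have hsnd : (s'.map Prod.snd).prod = Associates.mk a₂ := by
        have h := Multiset.prod_hom s' (MonoidHom.snd (Associates H₁) (Associates H₂))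
        simp only [MonoidHom.coe_snd] at h
        rw [h, hprod']
      rw [← Multiset.prod_add, ← Multiset.map_add, hsplit]
      exact hsnd
    have h2 : (sA.map Prod.snd).prod = 1 := by
      apply Multiset.prod_eq_one
      intro x hx
      obtain ⟨p, hp, rfl⟩ := Multiset.mem_map.1 hx
      exact (Multiset.mem_filter.1 hp).2
    rw [h2, one_mul] at h1
    exact h1
  · rw [← hcard, ← Multiset.card_map assocProdEquiv s, ← hs', ← hsplit, Multiset.card_add]

end Transfer

section Comb
variable {H₁ H₂ : Type*} [CommMonoid H₁] [CommMonoid H₂]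
  [DecidableEq (Associates H₁)] [DecidableEq (Associates H₂)]
  [DecidableEq (Associates (H₁ × H₂))]

/-- Combine factorizations of the components into a factorization of the pair. -/
noncomputable def combMul (x₁ : Multiset (Associates H₁)) (x₂ : Multiset (Associates H₂)) :
    Multiset (Associates (H₁ × H₂)) :=
  ((x₁.map fun u => (u, (1 : Associates H₂))) + (x₂.map fun v => ((1 : Associates H₁), v))).map
    (assocProdEquiv (M := H₁) (N := H₂)).symm

lemma combMul_card (x₁ : Multiset (Associates H₁)) (x₂ : Multiset (Associates H₂)) :
    (combMul x₁ x₂).card = x₁.card + x₂.card := by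
  simp [combMul]

lemma combMul_isFact {a₁ : H₁} {a₂ : H₂} {x₁ : Multiset (Associates H₁)}
    {x₂ : Multiset (Associates H₂)} (h₁ : IsFactorizationOf x₁ a₁)
    (h₂ : IsFactorizationOf x₂ a₂) :
    IsFactorizationOf (combMul x₁ x₂) ((a₁, a₂) : H₁ × H₂) := by
  constructor
  · intro p hp
    obtain ⟨q, hq, rfl⟩ := Multiset.mem_map.1 hp
    rw [MulEquiv.irreducible_iff (assocProdEquiv (M := H₁) (N := H₂)).symm]
    rcases Multiset.mem_add.1 hq with h | h
    · obtain ⟨u, hu, rfl⟩ := Multiset.mem_map.1 h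
      exact assoc_prod_irreducible_iff.2 (Or.inl ⟨h₁.1 u hu, rfl⟩)
    · obtain ⟨v, hv, rfl⟩ := Multiset.mem_map.1 h
      exact assoc_prod_irreducible_iff.2 (Or.inr ⟨rfl, h₂.1 v hv⟩)
  · rw [combMul, ← map_multiset_prod, Multiset.prod_add]
    have e₁ : ((x₁.map fun u => (u, (1 : Associates H₂))).prod) = (x₁.prod, 1) := by
      have h := Multiset.prod_hom x₁ (MonoidHom.inl (Associates H₁) (Associates H₂))
      exact h.trans (by simp)
    have e₂ : ((x₂.map fun v => ((1 : Associates H₁), v)).prod) = (1, x₂.prod) := by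
      have h := Multiset.prod_hom x₂ (MonoidHom.inr (Associates H₁) (Associates H₂))
      exact h.trans (by simp)
    rw [e₁, e₂, h₁.2, h₂.2]
    have : ((Associates.mk a₁, (1 : Associates H₂)) * ((1 : Associates H₁), Associates.mk a₂))
        = (Associates.mk a₁, Associates.mk a₂) := by
      simp [Prod.ext_iff]
    rw [this]
    exact assocProdEquiv_symm_mk a₁ a₂

lemma combMul_dist {x₁ y₁ : Multiset (Associates H₁)} {x₂ y₂ : Multiset (Associates H₂)}
    (hx₂ : ∀ u ∈ x₂, Irreducible u) (hy₂ : ∀ u ∈ y₂, Irreducible u) :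
    factorizationDist (combMul x₁ x₂) (combMul y₁ y₂) ≤
      factorizationDist x₁ y₁ + factorizationDist x₂ y₂ := by
  classical
  set f : Associates H₁ → Associates H₁ × Associates H₂ := fun u => (u, 1) with hf
  set g : Associates H₂ → Associates H₁ × Associates H₂ := fun v => (1, v) with hg
  have hinjf : Function.Injective f := fun a b h => congrArg Prod.fst h
  have hinjg : Function.Injective g := fun a b h => congrArg Prod.snd h
  have hinjs : Function.Injective (assocProdEquiv (M := H₁) (N := H₂)).symm :=
    (assocProdEquiv (M := H₁) (N := H₂)).symm.injective
  have hdisj : ∀ (A : Multiset (Associates H₂)), (∀ u ∈ A, Irreducible u) →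
      ∀ p : Associates H₁ × Associates H₂, p.2 = 1 → Multiset.count p (A.map g) = 0 := by
    intro A hA p hp
    rw [Multiset.count_eq_zero]
    intro hmem
    obtain ⟨v, hv, rfl⟩ := Multiset.mem_map.1 hmem
    exact (hA v hv).not_isUnit (by rw [show v = ((1 : Associates H₁), v).2 from rfl, hp]; exact isUnit_one)
  have hdisj' : ∀ (A : Multiset (Associates H₁)) (p : Associates H₁ × Associates H₂),
      ¬ p.2 = 1 → Multiset.count p (A.map f) = 0 := by
    intro A p hp
    rw [Multiset.count_eq_zero]
    intro hmem
    obtain ⟨u, hu, rfl⟩ := Multiset.mem_map.1 hmem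
    exact hp rfl
  have hkey : ∀ (u₁ v₁ : Multiset (Associates H₁)) (u₂ v₂ : Multiset (Associates H₂)),
      (∀ u ∈ u₂, Irreducible u) → (∀ u ∈ v₂, Irreducible u) →
      (combMul u₁ u₂ - combMul v₁ v₂).card = (u₁ - v₁).card + (u₂ - v₂).card := by
    intro u₁ v₁ u₂ v₂ hu₂ hv₂
    rw [combMul, combMul, ← map_sub_of_injective _ hinjs, Multiset.card_map]
    have hsub : (u₁.map f + u₂.map g) - (v₁.map f + v₂.map g)
        = (u₁.map f - v₁.map f) + (u₂.map g - v₂.map g) := by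
      apply sub_add_sub_disjoint
      intro p
      by_cases hp : p.2 = 1
      · exact Or.inl ⟨hdisj u₂ hu₂ p hp, hdisj v₂ hv₂ p hp⟩
      · exact Or.inr ⟨hdisj' u₁ p hp, hdisj' v₁ p hp⟩
    rw [hsub, Multiset.card_add, ← map_sub_of_injective _ hinjf, ← map_sub_of_injective _ hinjg,
      Multiset.card_map, Multiset.card_map]
  rw [factorizationDist, hkey x₁ y₁ x₂ y₂ hx₂ hy₂, hkey y₁ x₁ y₂ x₂ hy₂ hx₂]
  exact max_le (add_le_add (le_max_left _ _) (le_max_left _ _))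
    (add_le_add (le_max_right _ _) (le_max_right _ _))

end Comb

/-- Let `H₁` and `H₂` be atomic commutative unit-cancellative monoids, each satisfying
the Structure Theorem for Sets of Lengths and having finite weak successive distance.
Then the direct product `H₁ × H₂` has finite weak successive distance. -/
theorem weakSuccDist_finite_of_prod {H₁ H₂ : Type*} [CommMonoid H₁] [CommMonoid H₂]
    [DecidableEq (Associates H₁)] [DecidableEq (Associates H₂)]
    [DecidableEq (Associates (H₁ × H₂))]
    (hUC₁ : ∀ a u : H₁, a * u = a → IsUnit u)
    (hUC₂ : ∀ a u : H₂, a * u = a → IsUnit u)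
    (hAtomic₁ : ∀ a : H₁, ¬ IsUnit a →
      ∃ s : Multiset (Associates H₁), IsFactorizationOf s a)
    (hAtomic₂ : ∀ a : H₂, ¬ IsUnit a →
      ∃ s : Multiset (Associates H₂), IsFactorizationOf s a)
    (hSTSL₁ : SatisfiesSTSL H₁) (hSTSL₂ : SatisfiesSTSL H₂)
    (hδ₁ : ∃ N₁ : ℕ, WeakSuccDistBound H₁ N₁)
    (hδ₂ : ∃ N₂ : ℕ, WeakSuccDistBound H₂ N₂) :
    ∃ C : ℕ, WeakSuccDistBound (H₁ × H₂) C := by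
  obtain ⟨N₁, hN₁⟩ := hδ₁
  obtain ⟨N₂, hN₂⟩ := hδ₂
  obtain ⟨M₁, Δ₁, hne₁, hpos₁, hA₁⟩ := hSTSL₁
  obtain ⟨M₂, Δ₂, hne₂, hpos₂, hA₂⟩ := hSTSL₂
  set Mm : ℕ := max M₁ M₂ with hMm
  set Dm : ℕ := Δ₁.max' hne₁ * Δ₂.max' hne₂ with hDm
  set C₀ : ℕ := 7 * (Mm + Dm) + 2 with hC₀
  refine ⟨(N₁ + N₂) * C₀, ?_⟩
  have main : ∀ (a₁ : H₁) (a₂ : H₂) (k l : ℕ), k ∈ Lengths ((a₁, a₂) : H₁ × H₂) →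
      l ∈ Lengths ((a₁, a₂) : H₁ × H₂) → k < l →
      ∃ x y : Multiset (Associates (H₁ × H₂)),
        IsFactorizationOf x (a₁, a₂) ∧ IsFactorizationOf y (a₁, a₂) ∧
        x.card = k ∧ y.card = l ∧
        factorizationDist x y ≤ ((N₁ + N₂) * C₀) * (l - k) := by
    intro a₁ a₂ k l hk hl hkl
    obtain ⟨k₁, k₂, hk₁, hk₂, rfl⟩ := lengths_decomp hk
    obtain ⟨l₁, l₂, hl₁, hl₂, rfl⟩ := lengths_decomp hl
    obtain ⟨d₁, hd₁Δ, hA₁'⟩ := hA₁ a₁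
    obtain ⟨d₂, hd₂Δ, hA₂'⟩ := hA₂ a₂
    have hAa₁ : IsAAMP ((fun n : ℕ => (n : ℤ)) '' Lengths a₁) d₁ Mm :=
      aamp_mono hA₁' (le_max_left _ _)
    have hAa₂ : IsAAMP ((fun n : ℕ => (n : ℤ)) '' Lengths a₂) d₂ Mm :=
      aamp_mono hA₂' (le_max_right _ _)
    have hkey := key hAa₁ hAa₂ (hpos₁ d₁ hd₁Δ) (hpos₂ d₂ hd₂Δ)
      ⟨k₁, hk₁, rfl⟩ ⟨l₁, hl₁, rfl⟩ ⟨k₂, hk₂, rfl⟩ ⟨l₂, hl₂, rfl⟩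
      (by show ((k₁:ℤ) + k₂ < (l₁:ℤ) + l₂); exact_mod_cast hkl)
    obtain ⟨l₁', l₂', ⟨n₁, hn₁, rfl⟩, ⟨n₂, hn₂, rfl⟩, hsum, hb₁, hb₂⟩ := hkey
    have hsum' : (n₁:ℤ) + n₂ = (l₁:ℤ) + l₂ := hsum
    have hsumn : n₁ + n₂ = l₁ + l₂ := by exact_mod_cast hsum'
    obtain ⟨x₁, y₁, hfx₁, hfy₁, hcx₁, hcy₁, hdist₁⟩ := hN₁ a₁ k₁ n₁ hk₁ hn₁
    obtain ⟨x₂, y₂, hfx₂, hfy₂, hcx₂, hcy₂, hdist₂⟩ := hN₂ a₂ k₂ n₂ hk₂ hn₂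
    have hdd : (d₁ : ℤ) * d₂ ≤ (Dm : ℤ) := by
      exact_mod_cast Nat.mul_le_mul (Finset.le_max' _ _ hd₁Δ) (Finset.le_max' _ _ hd₂Δ)
    have ht0 : (0:ℤ) ≤ (l₁:ℤ) + l₂ - k₁ - k₂ := by
      have : ((k₁ + k₂ : ℕ) : ℤ) < ((l₁ + l₂ : ℕ) : ℤ) := by exact_mod_cast hkl
      push_cast at this; linarith
    have hC₀cast : (7 * ((Mm:ℤ) + (d₁:ℤ) * d₂) + 2) ≤ (C₀ : ℤ) := by
      rw [hC₀]; push_cast; linarith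
    have habs : ∀ e : ℤ, |e| ≤ (7 * ((Mm:ℤ) + (d₁:ℤ) * d₂) + 2) * ((l₁:ℤ) + l₂ - k₁ - k₂) →
        e.natAbs ≤ C₀ * (l₁ + l₂ - (k₁ + k₂)) := by
      intro e he
      have h2 : |e| ≤ (C₀ : ℤ) * ((l₁:ℤ) + l₂ - k₁ - k₂) :=
        le_trans he (mul_le_mul_of_nonneg_right hC₀cast ht0)
      have h3 : ((e.natAbs : ℤ)) ≤ ((C₀ * (l₁ + l₂ - (k₁ + k₂)) : ℕ) : ℤ) := by
        rw [Int.abs_eq_natAbs] at h2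
        refine le_trans h2 (le_of_eq ?_)
        push_cast [Nat.cast_sub (le_of_lt hkl)]
        ring
      exact_mod_cast h3
    have hb₁x : |(n₁:ℤ) - (k₁:ℤ)| ≤ (7 * ((Mm:ℤ) + (d₁:ℤ) * d₂) + 2) * ((l₁:ℤ) + l₂ - k₁ - k₂) := hb₁
    have hb₁' : ((n₁:ℤ) - (k₁:ℤ)).natAbs ≤ C₀ * (l₁ + l₂ - (k₁ + k₂)) := habs _ hb₁x
    have hb₂x : |(n₂:ℤ) - (k₂:ℤ)| ≤ (7 * ((Mm:ℤ) + (d₁:ℤ) * d₂) + 2) * ((l₁:ℤ) + l₂ - k₁ - k₂) := hb₂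
    have hb₂' : ((n₂:ℤ) - (k₂:ℤ)).natAbs ≤ C₀ * (l₁ + l₂ - (k₁ + k₂)) := habs _ hb₂x
    refine ⟨combMul x₁ x₂, combMul y₁ y₂, combMul_isFact hfx₁ hfx₂, combMul_isFact hfy₁ hfy₂,
      by rw [combMul_card, hcx₁, hcx₂], by rw [combMul_card, hcy₁, hcy₂, hsumn], ?_⟩
    have hD := combMul_dist (x₁ := x₁) (y₁ := y₁) hfx₂.1 hfy₂.1
    have h1 : factorizationDist x₁ y₁ ≤ N₁ * (C₀ * (l₁ + l₂ - (k₁ + k₂))) :=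
      le_trans hdist₁ (Nat.mul_le_mul_left _ hb₁')
    have h2 : factorizationDist x₂ y₂ ≤ N₂ * (C₀ * (l₁ + l₂ - (k₁ + k₂))) :=
      le_trans hdist₂ (Nat.mul_le_mul_left _ hb₂')
    calc factorizationDist (combMul x₁ x₂) (combMul y₁ y₂)
        ≤ factorizationDist x₁ y₁ + factorizationDist x₂ y₂ := hD
      _ ≤ N₁ * (C₀ * (l₁ + l₂ - (k₁ + k₂))) + N₂ * (C₀ * (l₁ + l₂ - (k₁ + k₂))) :=
          add_le_add h1 h2
      _ = (N₁ + N₂) * C₀ * (l₁ + l₂ - (k₁ + k₂)) := by ring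
  rintro ⟨a₁, a₂⟩ k l hk hl
  rcases lt_trichotomy k l with hlt | heq | hgt
  · obtain ⟨x, y, hx, hy, hcx, hcy, hd⟩ := main a₁ a₂ k l hk hl hlt
    refine ⟨x, y, hx, hy, hcx, hcy, ?_⟩
    have : ((l : ℤ) - (k : ℤ)).natAbs = l - k := by omega
    rw [this]
    exact hd
  · subst heq
    obtain ⟨s, hs, hc⟩ := hk
    refine ⟨s, s, hs, hs, hc, hc, ?_⟩
    simp [factorizationDist]
  · obtain ⟨x, y, hx, hy, hcx, hcy, hd⟩ := main a₁ a₂ l k hl hk hgt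
    refine ⟨y, x, hy, hx, hcy, hcx, ?_⟩
    have h1 : factorizationDist y x = factorizationDist x y := max_comm _ _
    have h2 : ((l : ℤ) - (k : ℤ)).natAbs = k - l := by omega
    rw [h1, h2]
    exact hd
end
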